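/- Let (G,δ,ε) be a comonad on a category A with a natural transformation t: G∘G ⟹ G∘G satisfying G(ε)t = ε_G, ε_G t = G(ε), t_G G(t) δ_G = G(δ) t, δ_G t = G(t) t_G G(δ), and the QYBE. Define t_{n+1} := (t_n)_G ∘ Gⁿ(t) with t₁ = t, and ε⁽ⁿ⁾ := ε ∘ G(ε) ∘ ⋯ ∘ G^{n−1}(ε): Gⁿ ⟹ Id. Then (ε⁽ⁿ⁾)_G = G(ε⁽ⁿ⁾) ∘ t_n and Gⁿ(ε) = ε_{Gⁿ} ∘ t_n for all n ≥ 1. -/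

import Mathlib

open CategoryTheory

variable {A : Type*} [Category A]

/-- `gpow G n M` is the `n`-th power `Gⁿ M` of the endofunctor `G` applied to `M`. -/
def gpow (Gf : A ⥤ A) : ℕ → A → A
  | 0, M => M
  | n+1, M => gpow Gf n (Gf.obj M)

/-- `gmap G n f = Gⁿ(f)`. -/
def gmap (Gf : A ⥤ A) : (n : ℕ) → {X Y : A} → (X ⟶ Y) → (gpow Gf n X ⟶ gpow Gf n Y)
  | 0, _, _, f => f
  | n+1, _, _, f => gmap Gf n (Gf.map f)

lemma gpow_succ_out (Gf : A ⥤ A) : ∀ (n : ℕ) (M : A), gpow Gf (n+1) M = Gf.obj (gpow Gf n M)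
  | 0, _ => rfl
  | n+1, M => gpow_succ_out Gf n (Gf.obj M)

lemma gpow_add (Gf : A ⥤ A) : ∀ (a b : ℕ) (M : A), gpow Gf a (gpow Gf b M) = gpow Gf (a + b) M
  | a, 0, M => rfl
  | a, b+1, M => by
      rw [Nat.add_succ]
      exact gpow_add Gf a b (Gf.obj M)

lemma gpow_add' (Gf : A ⥤ A) (a b c : ℕ) (h : a + b = c) (M : A) :
    gpow Gf a (gpow Gf b M) = gpow Gf c M := by subst h; exact gpow_add Gf a b M

/-- `tpow G t n` is the component family of `t⁽ⁿ⁺¹⁾`, where `t⁽¹⁾ = t` and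
`t⁽ⁿ⁺¹⁾ = (t⁽ⁿ⁾)_G ∘ Gⁿ(t)`. -/
def tpow (Gf : A ⥤ A) (t : Gf ⋙ Gf ⟶ Gf ⋙ Gf) :
    (n : ℕ) → (M : A) → (gpow Gf (n+2) M ⟶ gpow Gf (n+2) M)
  | 0, M => t.app M
  | n+1, M => gmap Gf (n+1) (t.app M) ≫ tpow Gf t n (Gf.obj M)


/-- `epow G n M` is the component at `M` of `ε⁽ⁿ⁾ = ε ∘ G(ε) ∘ ⋯ ∘ G^{n−1}(ε) : Gⁿ ⟹ Id`. -/
def epow (G : Comonad A) : (n : ℕ) → (M : A) → (gpow G.toFunctor n M ⟶ M)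
  | 0, M => 𝟙 M
  | n+1, M => gmap G.toFunctor n (G.ε.app M) ≫ epow G n M

lemma my_gmap_comp (Gf : A ⥤ A) : ∀ (n : ℕ) {X Y Z : A} (f : X ⟶ Y) (g : Y ⟶ Z),
    gmap Gf n (f ≫ g) = gmap Gf n f ≫ gmap Gf n g
  | 0, _, _, _, _, _ => rfl
  | n+1, _, _, _, f, g => by
      show gmap Gf n (Gf.map (f ≫ g)) = _
      rw [Gf.map_comp]
      exact my_gmap_comp Gf n _ _

lemma my_gmap_succ_out (Gf : A ⥤ A) : ∀ (n : ℕ) {X Y : A} (f : X ⟶ Y),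
    gmap Gf (n+1) f ≫ eqToHom (gpow_succ_out Gf n Y) =
      eqToHom (gpow_succ_out Gf n X) ≫ Gf.map (gmap Gf n f)
  | 0, _, _, f => by
      show Gf.map f ≫ eqToHom rfl = eqToHom rfl ≫ Gf.map f
      simp
  | n+1, _, _, f => my_gmap_succ_out Gf n (Gf.map f)

lemma my_tpow_natural (Gf : A ⥤ A) (t : Gf ⋙ Gf ⟶ Gf ⋙ Gf) :
    ∀ (k : ℕ) {X Y : A} (f : X ⟶ Y),
      gmap Gf (k+2) f ≫ tpow Gf t k Y = tpow Gf t k X ≫ gmap Gf (k+2) f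
  | 0, _, _, f => t.naturality f
  | k+1, X, Y, f => by
      show gmap Gf (k+1) ((Gf ⋙ Gf).map f) ≫
            gmap Gf (k+1) (t.app Y) ≫ tpow Gf t k (Gf.obj Y) =
          (gmap Gf (k+1) (t.app X) ≫ tpow Gf t k (Gf.obj X)) ≫
            gmap Gf (k+1) ((Gf ⋙ Gf).map f)
      have h1 : gmap Gf (k+1) ((Gf ⋙ Gf).map f) ≫ gmap Gf (k+1) (t.app Y) =
          gmap Gf (k+1) (t.app X) ≫ gmap Gf (k+1) ((Gf ⋙ Gf).map f) := by
        rw [← my_gmap_comp, ← my_gmap_comp, t.naturality]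
      have h2 : gmap Gf (k+1) ((Gf ⋙ Gf).map f) ≫ tpow Gf t k (Gf.obj Y) =
          tpow Gf t k (Gf.obj X) ≫ gmap Gf (k+1) ((Gf ⋙ Gf).map f) :=
        my_tpow_natural Gf t k (Gf.map f)
      exact ((Category.assoc _ _ _).symm.trans ((h1 =≫ tpow Gf t k (Gf.obj Y)).trans (Category.assoc _ _ _))).trans
        ((whisker_eq (gmap Gf (k+1) (t.app X)) h2).trans (Category.assoc _ _ _).symm)

/-- if `t` is a strong braiding on the comonad `(G,δ,ε)` and
`t_{n+1} = (t_n)_G ∘ Gⁿ(t)` with `t₁ = t` (here `tpow _ t k = t_{k+1}`), and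
`ε⁽ⁿ⁾ = ε ∘ G(ε) ∘ ⋯ ∘ G^{n−1}(ε)`, then `(ε⁽ⁿ⁾)_G = G(ε⁽ⁿ⁾) ∘ t_n` and
`Gⁿ(ε) = ε_{Gⁿ} ∘ t_n` for all `n ≥ 1` (stated with `n = k+1`). -/
theorem strong_braiding_counit_identities (G : Comonad A)
    (t : G.toFunctor ⋙ G.toFunctor ⟶ G.toFunctor ⋙ G.toFunctor)
    (hεG : ∀ M : A, t.app M ≫ G.toFunctor.map (G.ε.app M) = G.ε.app (G.toFunctor.obj M))
    (hGε : ∀ M : A, t.app M ≫ G.ε.app (G.toFunctor.obj M) = G.toFunctor.map (G.ε.app M))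
    (hGδ : ∀ M : A, G.δ.app (G.toFunctor.obj M) ≫ G.toFunctor.map (t.app M) ≫
        t.app (G.toFunctor.obj M) = t.app M ≫ G.toFunctor.map (G.δ.app M))
    (hδG : ∀ M : A, t.app M ≫ G.δ.app (G.toFunctor.obj M) =
      G.toFunctor.map (G.δ.app M) ≫ t.app (G.toFunctor.obj M) ≫ G.toFunctor.map (t.app M))
    (hqybe : ∀ M : A, G.toFunctor.map (t.app M) ≫ t.app (G.toFunctor.obj M) ≫
        G.toFunctor.map (t.app M) =
      t.app (G.toFunctor.obj M) ≫ G.toFunctor.map (t.app M) ≫ t.app (G.toFunctor.obj M)) :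
    (∀ (k : ℕ) (M : A),
      epow G (k+1) (G.toFunctor.obj M) =
        tpow G.toFunctor t k M ≫
          eqToHom (show gpow G.toFunctor (k+2) M = G.toFunctor.obj (gpow G.toFunctor (k+1) M)
            from gpow_succ_out G.toFunctor (k+1) M) ≫
          G.toFunctor.map (epow G (k+1) M)) ∧
    (∀ (k : ℕ) (M : A),
      gmap G.toFunctor (k+1) (G.ε.app M) =
        tpow G.toFunctor t k M ≫
          eqToHom (show gpow G.toFunctor (k+2) M = G.toFunctor.obj (gpow G.toFunctor (k+1) M)
            from gpow_succ_out G.toFunctor (k+1) M) ≫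
          G.ε.app (gpow G.toFunctor (k+1) M)) := by
  have part2 : ∀ (k : ℕ) (M : A),
      gmap G.toFunctor (k+1) (G.ε.app M) =
        tpow G.toFunctor t k M ≫ eqToHom (gpow_succ_out G.toFunctor (k+1) M) ≫
          G.ε.app (gpow G.toFunctor (k+1) M) := by
    intro k
    induction k with
    | zero =>
        intro M
        show G.toFunctor.map (G.ε.app M) = t.app M ≫ 𝟙 _ ≫ G.ε.app (G.toFunctor.obj M)
        rw [Category.id_comp, hGε]
    | succ k ih =>
        intro M
        show gmap G.toFunctor (k+1) (G.toFunctor.map (G.ε.app M)) =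
          (gmap G.toFunctor (k+1) (t.app M) ≫ tpow G.toFunctor t k (G.toFunctor.obj M)) ≫
            eqToHom (gpow_succ_out G.toFunctor (k+1) (G.toFunctor.obj M)) ≫
            G.ε.app (gpow G.toFunctor (k+1) (G.toFunctor.obj M))
        rw [← hGε, my_gmap_comp, ih (G.toFunctor.obj M)]
        exact (Category.assoc _ _ _).symm
  have part1 : ∀ (k : ℕ) (M : A),
      epow G (k+1) (G.toFunctor.obj M) =
        tpow G.toFunctor t k M ≫ eqToHom (gpow_succ_out G.toFunctor (k+1) M) ≫
          G.toFunctor.map (epow G (k+1) M) := by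
    intro k
    induction k with
    | zero =>
        intro M
        show G.ε.app (G.toFunctor.obj M) ≫ 𝟙 _ = t.app M ≫ 𝟙 _ ≫ G.toFunctor.map (G.ε.app M ≫ 𝟙 M)
        simp [hεG]
    | succ k ih =>
        intro M
        have hnat : gmap G.toFunctor (k+1) (G.toFunctor.map (G.ε.app M)) ≫ tpow G.toFunctor t k M =
            tpow G.toFunctor t k (G.toFunctor.obj M) ≫ gmap G.toFunctor (k+1) (G.toFunctor.map (G.ε.app M)) :=
          my_tpow_natural G.toFunctor t k (G.ε.app M)
        have hout : gmap G.toFunctor (k+1) (G.toFunctor.map (G.ε.app M)) ≫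
              eqToHom (gpow_succ_out G.toFunctor (k+1) M) =
            eqToHom (gpow_succ_out G.toFunctor (k+1) (G.toFunctor.obj M)) ≫
              G.toFunctor.map (gmap G.toFunctor (k+1) (G.ε.app M)) :=
          my_gmap_succ_out G.toFunctor (k+1) (G.ε.app M)
        have hnat' := reassoc_of% hnat
        have hout' := reassoc_of% hout
        show gmap G.toFunctor (k+1) (G.ε.app (G.toFunctor.obj M)) ≫ epow G (k+1) (G.toFunctor.obj M) =
          (gmap G.toFunctor (k+1) (t.app M) ≫ tpow G.toFunctor t k (G.toFunctor.obj M)) ≫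
            eqToHom (gpow_succ_out G.toFunctor (k+1) (G.toFunctor.obj M)) ≫
            G.toFunctor.map (gmap G.toFunctor (k+1) (G.ε.app M) ≫ epow G (k+1) M)
        rw [ih M, ← hεG, my_gmap_comp, G.toFunctor.map_comp]
        exact (Category.assoc _ _ _).trans ((whisker_eq (gmap G.toFunctor (k+1) (t.app M))
          (((Category.assoc _ _ _).symm.trans ((hnat =≫ _).trans (Category.assoc _ _ _))).trans
            (whisker_eq (tpow G.toFunctor t k (G.toFunctor.obj M))
              ((Category.assoc _ _ _).symm.trans ((hout =≫ _).trans (Category.assoc _ _ _)))))).trans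
          (Category.assoc _ _ _).symm)
  exact ⟨part1, part2⟩
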